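/- The graph code C(G) of any simple graph G on n vertices is self-dual with respect to the trace Hermitian inner product: C(G) = C(G)*. -/

import Mathlib

noncomputable section

/-- The field with 4 elements. -/
abbrev F4 := GaloisField 2 2

/-- The trace Hermitian inner product on `F4^n`. -/
def trIP {n : ℕ} (a b : Fin n → F4) : F4 :=
  ∑ j, (a j * (b j) ^ 2 + (a j) ^ 2 * b j)

lemma F4.two : (2 : F4) = 0 := by
  have := CharP.cast_eq_zero F4 2
  exact_mod_cast this

instance : Fintype F4 := Fintype.ofFinite F4

lemma F4.pow4 (x : F4) : x ^ 4 = x := by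
  have h : Fintype.card F4 = 4 := by
    have := GaloisField.card 2 2 (by norm_num)
    simpa [Nat.card_eq_fintype_card] using this
  have := FiniteField.pow_card x
  rwa [h] at this

lemma F4.sq_or (t : F4) (h : t ^ 2 = t) : t = 0 ∨ t = 1 := by
  have : t * (t - 1) = 0 := by linear_combination h
  rcases mul_eq_zero.mp this with h | h
  · exact Or.inl h
  · exact Or.inr (sub_eq_zero.mp h)

lemma zmod2_cases (k : ZMod 2) : k = 0 ∨ k = 1 := by revert k; decide

lemma trIP_comm {n : ℕ} (a b : Fin n → F4) : trIP a b = trIP b a := by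
  unfold trIP; apply Finset.sum_congr rfl; intro j _; ring

lemma trIP_add_left {n : ℕ} (a a' b : Fin n → F4) :
    trIP (a + a') b = trIP a b + trIP a' b := by
  unfold trIP
  rw [← Finset.sum_add_distrib]
  apply Finset.sum_congr rfl
  intro j _
  simp only [Pi.add_apply]
  linear_combination (a j * a' j * b j) * F4.two

lemma trIP_smul_left {n : ℕ} (k : ZMod 2) (a b : Fin n → F4) :
    trIP (k • a) b = k • trIP a b := by
  rcases zmod2_cases k with rfl | rfl
  · simp [trIP]
  · simp

lemma trIP_sq {n : ℕ} (a b : Fin n → F4) : (trIP a b) ^ 2 = trIP a b := by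
  unfold trIP
  rw [sum_pow_char]
  apply Finset.sum_congr rfl
  intro j _
  linear_combination (b j)^2 * F4.pow4 (a j) + (a j)^2 * F4.pow4 (b j)
    + (a j)^3 * (b j)^3 * F4.two

/-- The trace-Hermitian form composed with an `F2`-linear functional, as a bilinear form. -/
def Bform {n : ℕ} (π : F4 →ₗ[ZMod 2] ZMod 2) :
    LinearMap.BilinForm (ZMod 2) (Fin n → F4) :=
  LinearMap.mk₂ (ZMod 2) (fun w c => π (trIP w c))
    (fun a a' b => by rw [trIP_add_left, map_add])
    (fun k a b => by rw [trIP_smul_left, map_smul])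
    (fun a b b' => by rw [trIP_comm, trIP_add_left, trIP_comm b a, trIP_comm b' a, map_add])
    (fun k a b => by rw [trIP_comm, trIP_smul_left, trIP_comm b a, map_smul])

@[simp] lemma Bform_apply {n : ℕ} (π : F4 →ₗ[ZMod 2] ZMod 2) (w c : Fin n → F4) :
    Bform π w c = π (trIP w c) := rfl

/-- The graph code `C(G)` of any simple graph `G` on `n` vertices, the
`F_2`-span of the rows of `Γ(G) + ω·I_n`, is self-dual with respect to the
trace Hermitian inner product: `C(G) = C(G)*`. -/
theorem graphCode_selfDual {n : ℕ} (Γ : Matrix (Fin n) (Fin n) F4)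
    (hsym : Γ.IsSymm) (hdiag : ∀ i, Γ i i = 0)
    (h01 : ∀ i j, Γ i j = 0 ∨ Γ i j = 1)
    (ω : F4) (hω : ω ^ 2 + ω + 1 = 0)
    (M : Fin n → Fin n → F4)
    (hM : ∀ i j, M i j = Γ i j + ω * (if i = j then 1 else 0))
    (C : Submodule (ZMod 2) (Fin n → F4))
    (hC : C = Submodule.span (ZMod 2) (Set.range M)) :
    (C : Set (Fin n → F4)) = {w | ∀ c ∈ C, trIP w c = 0} := by
  have h10 : (1 : F4) ≠ 0 := one_ne_zero
  -- basic facts about ω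
  have hω0 : ω ≠ 0 := by
    intro h; rw [h] at hω; simp at hω
  have hω1 : ω ≠ 1 := by
    intro h; rw [h] at hω
    apply h10
    linear_combination hω - F4.two
  -- the basis {1, ω} of F4 over F2
  have hli : LinearIndependent (ZMod 2) ![1, ω] := by
    rw [linearIndependent_fin2]
    refine ⟨by simpa using hω0, fun a => ?_⟩
    rcases zmod2_cases a with rfl | rfl
    · simpa using h10.symm
    · simpa using hω1
  have hcard : Fintype.card (Fin 2) = Module.finrank (ZMod 2) F4 := by
    simp [GaloisField.finrank 2 (by norm_num : 2 ≠ 0)]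
  let b : Module.Basis (Fin 2) (ZMod 2) F4 := basisOfLinearIndependentOfCardEqFinrank hli hcard
  have hb : ⇑b = ![1, ω] := coe_basisOfLinearIndependentOfCardEqFinrank hli hcard
  let π : F4 →ₗ[ZMod 2] ZMod 2 := b.coord 0
  let ρ : F4 →ₗ[ZMod 2] ZMod 2 := b.coord 1
  have hπ1 : π 1 = 1 := by
    have : π (b 0) = 1 := by simp [π, Module.Basis.coord_apply, Module.Basis.repr_self]
    rwa [hb] at this; 
  have hπω : π ω = 0 := by
    have : π (b 1) = 0 := by simp [π, Module.Basis.coord_apply, Module.Basis.repr_self]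
    rwa [hb] at this
  have hρ1 : ρ 1 = 0 := by
    have : ρ (b 0) = 0 := by simp [ρ, Module.Basis.coord_apply, Module.Basis.repr_self]
    rwa [hb] at this
  have hρω : ρ ω = 1 := by
    have : ρ (b 1) = 1 := by simp [ρ, Module.Basis.coord_apply, Module.Basis.repr_self]
    rwa [hb] at this
  -- π detects vanishing of trace values
  have hπ_zero : ∀ t : F4, t ^ 2 = t → π t = 0 → t = 0 := by
    intro t hsq hz
    rcases F4.sq_or t hsq with rfl | rfl
    · rfl
    · rw [hπ1] at hz; exact absurd hz one_ne_zero
  -- the bilinear form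
  set B : LinearMap.BilinForm (ZMod 2) (Fin n → F4) := Bform π with hBdef
  -- orthogonality of the generators
  have horth : ∀ i j, trIP (M i) (M j) = 0 := by
    intro i j
    have key : ∀ k, M i k * (M j k) ^ 2 + (M i k) ^ 2 * M j k
        = Γ i k * (if j = k then 1 else 0) + (if i = k then 1 else 0) * Γ j k := by
      intro k
      rw [hM i k, hM j k]
      set g := Γ i k with hgdef
      set h := Γ j k with hhdef
      set s := (if i = k then (1:F4) else 0) with hsdef
      set t := (if j = k then (1:F4) else 0) with htdef
      have hg2 : g ^ 2 = g := by rcases h01 i k with e | e <;> rw [← hgdef] at e <;> rw [e] <;> ring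
      have hh2 : h ^ 2 = h := by rcases h01 j k with e | e <;> rw [← hhdef] at e <;> rw [e] <;> ring
      have hs2 : s ^ 2 = s := by rw [hsdef]; split_ifs <;> ring
      have ht2 : t ^ 2 = t := by rw [htdef]; split_ifs <;> ring
      linear_combination (g + ω*s) * hh2 + (g*ω^2 + ω^3*s) * ht2 + (h + ω*t) * hg2
        + (ω^2*h + ω^3*t) * hs2 + (g*t + s*h) * hω
        + (g*h + g*ω*t*h + ω^2*s*t*h + ω*s*g*h + ω^2*s*g*t + ω^3*s*t - g*t - s*h) * F4.two
    unfold trIP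
    rw [Finset.sum_congr rfl (fun k _ => key k), Finset.sum_add_distrib]
    simp only [mul_ite, mul_one, mul_zero, ite_mul, one_mul, zero_mul,
      Finset.sum_ite_eq, Finset.mem_univ, if_true]
    have := hsym.apply i j
    linear_combination this + (Γ i j) * F4.two
  -- B is reflexive
  have hrefl : B.IsRefl := by
    intro x y hxy
    rw [hBdef, Bform_apply] at hxy ⊢
    rw [trIP_comm y x]
    exact hxy
  -- computation of trIP against a single coordinate vector
  have key1 : ∀ (w : Fin n → F4) (j : Fin n) (x : F4),
      trIP w (Pi.single j x) = w j * x ^ 2 + (w j) ^ 2 * x := by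
    intro w j x
    unfold trIP
    have : ∀ k, w k * ((Pi.single j x : Fin n → F4) k) ^ 2
          + (w k) ^ 2 * (Pi.single j x : Fin n → F4) k
        = if k = j then w j * x ^ 2 + (w j) ^ 2 * x else 0 := by
      intro k
      rcases eq_or_ne k j with rfl | hkj
      · simp
      · simp [Pi.single_apply, hkj]
    rw [Finset.sum_congr rfl (fun k _ => this k)]
    simp
  -- B is nondegenerate
  have hnd : B.Nondegenerate := by
    refine (LinearMap.IsRefl.nondegenerate_iff_separatingLeft hrefl).mpr ?_
    intro w hw
    funext j
    have h1 := hw (Pi.single j 1)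
    have h2 := hw (Pi.single j ω)
    rw [hBdef, Bform_apply] at h1 h2
    have t1 : trIP w (Pi.single j 1) = 0 := hπ_zero _ (trIP_sq _ _) h1
    have t2 : trIP w (Pi.single j ω) = 0 := hπ_zero _ (trIP_sq _ _) h2
    rw [key1] at t1 t2
    have hsq : (w j) ^ 2 = w j := by linear_combination t1 - (w j) * F4.two
    rcases F4.sq_or (w j) hsq with h0 | h1'
    · exact h0
    · exfalso
      rw [h1'] at t2
      exact h10 (by linear_combination hω - t2)
  -- C is contained in its own orthogonal complement
  have hCle : C ≤ B.orthogonal C := by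
    conv_lhs => rw [hC]
    rw [Submodule.span_le]
    rintro _ ⟨i, rfl⟩
    intro c hc
    rw [hC] at hc
    have hker : Submodule.span (ZMod 2) (Set.range M) ≤
        LinearMap.ker ((LinearMap.flip (B : _)) (M i)) := by
      rw [Submodule.span_le]
      rintro _ ⟨k, rfl⟩
      simp only [SetLike.mem_coe, LinearMap.mem_ker, LinearMap.flip_apply]
      rw [hBdef, Bform_apply, horth k i, map_zero]
    exact hker hc
  -- linear independence of the rows of M
  have hliM : LinearIndependent (ZMod 2) M := by
    let L : (Fin n → F4) →ₗ[ZMod 2] (Fin n → ZMod 2) :=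
      LinearMap.pi (fun j => ρ.comp (LinearMap.proj j))
    have hLM : ∀ i, L (M i) = Pi.single i 1 := by
      intro i
      funext j
      simp only [L, LinearMap.pi_apply, LinearMap.comp_apply, LinearMap.proj_apply]
      rw [hM i j, map_add]
      have hΓ : ρ (Γ i j) = 0 := by
        rcases h01 i j with e | e <;> rw [e]
        · exact map_zero ρ
        · exact hρ1
      rcases eq_or_ne i j with rfl | hij
      · simp [hΓ, hρω]
      · simp [hΓ, hij, Pi.single_apply, Ne.symm hij]
    have hL : LinearIndependent (ZMod 2) (fun i => L (M i)) := by
      have : (fun i => L (M i)) = (fun i => Pi.single i 1 : Fin n → Fin n → ZMod 2) :=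
        funext hLM
      rw [this]
      have := (Pi.basisFun (ZMod 2) (Fin n)).linearIndependent
      have h2 : ⇑(Pi.basisFun (ZMod 2) (Fin n))
          = (fun i => Pi.single i 1 : Fin n → Fin n → ZMod 2) :=
        funext fun i => Pi.basisFun_apply (ZMod 2) (Fin n) i
      rwa [h2] at this
    exact hL.of_comp L
  -- dimension count
  have hfC : Module.finrank (ZMod 2) C = n := by
    rw [hC, finrank_span_eq_card hliM, Fintype.card_fin]
  have hfV : Module.finrank (ZMod 2) (Fin n → F4) = 2 * n := by
    rw [Module.finrank_pi_fintype]
    simp [GaloisField.finrank 2 (by norm_num : 2 ≠ 0), mul_comm]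
  have hfO : Module.finrank (ZMod 2) (B.orthogonal C) = n := by
    rw [LinearMap.BilinForm.finrank_orthogonal hnd, hfV, hfC]
    omega
  have hCeq : C = B.orthogonal C :=
    Submodule.eq_of_le_of_finrank_le hCle (le_of_eq (hfO.trans hfC.symm))
  -- conclusion
  ext w
  simp only [SetLike.mem_coe, Set.mem_setOf_eq]
  constructor
  · intro hw c hc
    have : w ∈ B.orthogonal C := hCeq ▸ hw
    have hz : B c w = 0 := this c hc
    rw [hBdef, Bform_apply] at hz
    have := hπ_zero _ (trIP_sq c w) hz
    rw [trIP_comm]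
    exact this
  · intro hw
    rw [hCeq]
    intro c hc
    show B c w = 0
    rw [hBdef, Bform_apply, trIP_comm, hw c hc, map_zero]

end
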